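/- The operator C is automatically selfadjoint, positive-definite (⟨x, Cx⟩ > 0 for all nonzero x), hence bijective, and it is conjugated into its inverse by the involution: s ∘ C ∘ s = C⁻¹. -/

import Mathlib

/-- if `s` is a conjugate-linear involution on a finite-dimensional complex
inner product space `V` and `C` is a ℂ-linear map with `⟨s x, s y⟩ = ⟨y, C x⟩`, then `C` is
selfadjoint, positive-definite, hence bijective, and `s ∘ C ∘ s = C⁻¹`. -/
theorem modular_map_selfadjoint_positive
    {V : Type*} [NormedAddCommGroup V] [InnerProductSpace ℂ V] [FiniteDimensional ℂ V]
    (s : V →ₗ⋆[ℂ] V) (hs : ∀ x : V, s (s x) = x)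
    (C : V →ₗ[ℂ] V)
    (hC : ∀ x y : V, (inner ℂ (s x) (s y) : ℂ) = inner ℂ y (C x)) :
    C.IsSymmetric ∧
    (∀ x : V, x ≠ 0 → ∃ r : ℝ, ((inner ℂ x (C x) : ℂ) = (r : ℂ)) ∧ 0 < r) ∧
    Function.Bijective C ∧
    (∀ x : V, C (s (C (s x))) = x) ∧
    (∀ x : V, s (C (s (C x))) = x) := by
  have hsne : ∀ x : V, x ≠ 0 → s x ≠ 0 := by
    intro x hx h
    apply hx
    rw [← hs x, h, map_zero]
  have hself : ∀ x : V, (inner ℂ x (C x) : ℂ) = ((‖s x‖ ^ 2 : ℝ) : ℂ) := by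
    intro x
    rw [← hC x x, inner_self_eq_norm_sq_to_K]
    norm_cast
  have hsymm : C.IsSymmetric := by
    intro x y
    have h1 : (inner ℂ x (C y) : ℂ) = inner ℂ (s y) (s x) := (hC y x).symm
    rw [h1, ← inner_conj_symm, ← hC x y, inner_conj_symm]
  have hpos : ∀ x : V, x ≠ 0 → ∃ r : ℝ, ((inner ℂ x (C x) : ℂ) = (r : ℂ)) ∧ 0 < r := by
    intro x hx
    exact ⟨‖s x‖ ^ 2, hself x, pow_pos (norm_pos_iff.mpr (hsne x hx)) 2⟩
  have hinj : Function.Injective C := by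
    intro x y hxy
    rw [← sub_eq_zero] at hxy ⊢
    rw [← map_sub] at hxy
    by_contra h
    have := hself (x - y)
    rw [hxy, inner_zero_right] at this
    have : ‖s (x - y)‖ ^ 2 = 0 := by exact_mod_cast this.symm
    exact hsne (x - y) h (norm_eq_zero.mp (by nlinarith [norm_nonneg (s (x - y))]))
  have key : ∀ x : V, C (s (C (s x))) = x := by
    intro x
    apply ext_inner_left ℂ
    intro y
    have h1 : (inner ℂ y (C (s (C (s x)))) : ℂ) = inner ℂ (C (s x)) (s y) := by
      rw [← hC (s (C (s x))) y, hs]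
    have h2 : (inner ℂ (s y) (C (s x)) : ℂ) = inner ℂ x y := by
      rw [← hC (s x) (s y), hs, hs]
    rw [h1, ← inner_conj_symm, h2, inner_conj_symm]
  have key2 : ∀ x : V, s (C (s (C x))) = x := by
    intro x
    have := key (s x)
    rw [hs] at this
    rw [this, hs]
  refine ⟨hsymm, hpos, ⟨hinj, ?_⟩, key, key2⟩
  intro y
  exact ⟨s (C (s y)), key y⟩
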